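/- (Tangent cone to the positive semidefinite cone.) Let 𝒮ⁿ denote the space of real symmetric n×n matrices and 𝒮ⁿ₊ ⊆ 𝒮ⁿ the cone of positive semidefinite matrices. For every W ∈ 𝒮ⁿ₊, the tangent cone to 𝒮ⁿ₊ at W (within 𝒮ⁿ) is { H ∈ 𝒮ⁿ : uᵀHu ≥ 0 for every u in the kernel of W }. -/

import Mathlib

open Matrix Filter Topology

lemma quad_continuous (n : ℕ) (u : Fin n → ℝ) :
    Continuous fun H : Matrix (Fin n) (Fin n) ℝ => u ⬝ᵥ H.mulVec u := by
  simp only [dotProduct, mulVec]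
  exact continuous_finset_sum _ fun i _ => continuous_const.mul
    (continuous_finset_sum _ fun j _ =>
      (by fun_prop))

lemma quad_continuous' (n : ℕ) (M : Matrix (Fin n) (Fin n) ℝ) :
    Continuous fun u : Fin n → ℝ => u ⬝ᵥ M.mulVec u := by
  simp only [dotProduct, mulVec]
  exact continuous_finset_sum _ fun i _ => (continuous_apply i).mul
    (continuous_finset_sum _ fun j _ => continuous_const.mul (continuous_apply j))

lemma exists_delta (n : ℕ) (W H : Matrix (Fin n) (Fin n) ℝ) (hW : W.PosSemidef)
    (hHsym : Hᵀ = H)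
    (hker : ∀ u : Fin n → ℝ, W.mulVec u = 0 → 0 ≤ u ⬝ᵥ H.mulVec u)
    (ε : ℝ) (hε : 0 < ε) :
    ∃ δ : ℝ, 0 < δ ∧ (W + δ • (H + ε • (1 : Matrix (Fin n) (Fin n) ℝ))).PosSemidef := by
  set A : Matrix (Fin n) (Fin n) ℝ := H + ε • (1 : Matrix (Fin n) (Fin n) ℝ) with hA
  have hAsym : Aᵀ = A := by
    simp [hA, transpose_add, transpose_smul, hHsym]
  by_contra hcon
  push_neg at hcon
  -- for each k, get a unit vector with negative quadratic value
  have key : ∀ k : ℕ, ∃ y : Fin n → ℝ, ‖y‖ = 1 ∧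
      y ⬝ᵥ (W + ((k : ℝ) + 1)⁻¹ • A).mulVec y < 0 := by
    intro k
    have hδ : (0:ℝ) < ((k : ℝ) + 1)⁻¹ := by positivity
    have hnp := hcon _ hδ
    rw [posSemidef_iff_dotProduct_mulVec] at hnp
    have hherm : (W + ((k : ℝ) + 1)⁻¹ • A).IsHermitian := by
      rw [Matrix.IsHermitian, conjTranspose_eq_transpose_of_trivial]
      simp [transpose_add, transpose_smul, hAsym,
        show Wᵀ = W by have := hW.1; rwa [IsHermitian, conjTranspose_eq_transpose_of_trivial] at this]
    push_neg at hnp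
    obtain ⟨x, hx⟩ := hnp hherm
    simp only [star_trivial] at hx
    have hxne : x ≠ 0 := by
      rintro rfl; simp at hx
    refine ⟨‖x‖⁻¹ • x, ?_, ?_⟩
    · simp [norm_smul, norm_inv, inv_mul_cancel₀ (norm_ne_zero_iff.mpr hxne)]
    · rw [mulVec_smul, dotProduct_smul, smul_dotProduct]
      have : (0:ℝ) < ‖x‖⁻¹ := inv_pos.mpr (norm_pos_iff.mpr hxne)
      simp only [smul_eq_mul]
      exact mul_neg_of_pos_of_neg this (mul_neg_of_pos_of_neg this hx)
  choose y hy1 hy2 using key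
  have hmem : ∀ k, y k ∈ Metric.sphere (0 : Fin n → ℝ) 1 := by
    intro k; simpa [mem_sphere_zero_iff_norm] using hy1 k
  obtain ⟨z, hz, φ, hφ, hlim⟩ := (isCompact_sphere (0 : Fin n → ℝ) 1).tendsto_subseq hmem
  have hzne : z ≠ 0 := by
    intro h; rw [h] at hz; simp at hz
  -- limits of the quadratic forms
  have hWlim : Tendsto (fun k => (y (φ k)) ⬝ᵥ W.mulVec (y (φ k))) atTop
      (𝓝 (z ⬝ᵥ W.mulVec z)) := ((quad_continuous' n W).tendsto z).comp hlim
  have hAlim : Tendsto (fun k => (y (φ k)) ⬝ᵥ A.mulVec (y (φ k))) atTop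
      (𝓝 (z ⬝ᵥ A.mulVec z)) := ((quad_continuous' n A).tendsto z).comp hlim
  have hδlim : Tendsto (fun k : ℕ => ((φ k : ℝ) + 1)⁻¹) atTop (𝓝 0) := by
    have h1 : Tendsto (fun k : ℕ => ((k : ℝ) + 1)⁻¹) atTop (𝓝 0) := by
      simpa [one_div] using tendsto_one_div_add_atTop_nhds_zero_nat (𝕜 := ℝ)
    exact h1.comp hφ.tendsto_atTop
  have hsplit : ∀ k, (y k) ⬝ᵥ (W + ((k : ℝ) + 1)⁻¹ • A).mulVec (y k) =
      (y k) ⬝ᵥ W.mulVec (y k) + ((k : ℝ) + 1)⁻¹ * ((y k) ⬝ᵥ A.mulVec (y k)) := by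
    intro k
    rw [add_mulVec, dotProduct_add, smul_mulVec, dotProduct_smul, smul_eq_mul]
  -- each W-term is nonneg, each A-term is negative
  have hWnn : ∀ k, 0 ≤ (y k) ⬝ᵥ W.mulVec (y k) := fun k => by
    simpa [star_trivial] using hW.dotProduct_mulVec_nonneg (y k)
  have hAneg : ∀ k, (y k) ⬝ᵥ A.mulVec (y k) < 0 := by
    intro k
    have := hy2 k
    rw [hsplit k] at this
    nlinarith [hWnn k, show (0:ℝ) < ((k:ℝ)+1)⁻¹ by positivity]
  -- limit statements
  have hAz : z ⬝ᵥ A.mulVec z ≤ 0 :=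
    le_of_tendsto hAlim (Eventually.of_forall fun k => (hAneg (φ k)).le)
  have hWz : z ⬝ᵥ W.mulVec z ≤ 0 := by
    have hcomb : Tendsto (fun k => (y (φ k)) ⬝ᵥ W.mulVec (y (φ k)) +
        ((φ k : ℝ) + 1)⁻¹ * ((y (φ k)) ⬝ᵥ A.mulVec (y (φ k)))) atTop
        (𝓝 (z ⬝ᵥ W.mulVec z + 0 * (z ⬝ᵥ A.mulVec z))) :=
      hWlim.add (hδlim.mul hAlim)
    rw [zero_mul, add_zero] at hcomb
    refine le_of_tendsto hcomb (Eventually.of_forall fun k => ?_)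
    have := hy2 (φ k)
    rw [hsplit (φ k)] at this
    linarith
  have hWz0 : z ⬝ᵥ W.mulVec z = 0 :=
    le_antisymm hWz (by simpa [star_trivial] using hW.dotProduct_mulVec_nonneg z)
  have hWker : W.mulVec z = 0 := by
    have := (hW.dotProduct_mulVec_zero_iff z).mp (by simpa [star_trivial] using hWz0)
    simpa using this
  have hHz : 0 ≤ z ⬝ᵥ H.mulVec z := hker z hWker
  have hzz : 0 < z ⬝ᵥ z := by
    have h0 : (0:ℝ) ≤ z ⬝ᵥ z := by
      rw [dotProduct]; exact Finset.sum_nonneg fun i _ => mul_self_nonneg _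
    rcases lt_or_eq_of_le h0 with h | h
    · exact h
    · exact absurd (dotProduct_self_eq_zero.mp h.symm) hzne
  have : z ⬝ᵥ A.mulVec z = z ⬝ᵥ H.mulVec z + ε * (z ⬝ᵥ z) := by
    rw [hA, add_mulVec, dotProduct_add, smul_mulVec, one_mulVec, dotProduct_smul,
      smul_eq_mul]
  nlinarith

theorem tangent_cone_psd (n : ℕ)
    (W : Matrix (Fin n) (Fin n) ℝ) (hW : W.PosSemidef) :
    closure {H : Matrix (Fin n) (Fin n) ℝ |
        ∃ t : ℝ, 0 ≤ t ∧ ∃ S : Matrix (Fin n) (Fin n) ℝ, S.PosSemidef ∧ H = t • (S - W)}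
      = {H : Matrix (Fin n) (Fin n) ℝ | Hᵀ = H ∧
          ∀ u : Fin n → ℝ, W.mulVec u = 0 → 0 ≤ u ⬝ᵥ H.mulVec u} := by
  have hWt : Wᵀ = W := by
    have := hW.1; rwa [IsHermitian, conjTranspose_eq_transpose_of_trivial] at this
  apply le_antisymm
  · -- closure ⊆ RHS
    have hclosed : IsClosed {H : Matrix (Fin n) (Fin n) ℝ | Hᵀ = H ∧
        ∀ u : Fin n → ℝ, W.mulVec u = 0 → 0 ≤ u ⬝ᵥ H.mulVec u} := by
      have heq : {H : Matrix (Fin n) (Fin n) ℝ | Hᵀ = H ∧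
          ∀ u : Fin n → ℝ, W.mulVec u = 0 → 0 ≤ u ⬝ᵥ H.mulVec u}
          = {H : Matrix (Fin n) (Fin n) ℝ | Hᵀ = H} ∩
            ⋂ u ∈ {u : Fin n → ℝ | W.mulVec u = 0},
              {H : Matrix (Fin n) (Fin n) ℝ | 0 ≤ u ⬝ᵥ H.mulVec u} := by
        ext H
        simp only [Set.mem_setOf_eq, Set.mem_inter_iff, Set.mem_iInter]
      rw [heq]
      refine IsClosed.inter ?_ (isClosed_biInter fun u _ => ?_)
      · have hct : Continuous fun H : Matrix (Fin n) (Fin n) ℝ => Hᵀ :=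
          continuous_pi fun i => continuous_pi fun j =>
            (continuous_apply i).comp (continuous_apply j)
        exact isClosed_eq hct continuous_id
      · exact isClosed_le continuous_const (quad_continuous n u)
    apply closure_minimal _ hclosed
    rintro H ⟨t, ht, S, hS, rfl⟩
    have hSt : Sᵀ = S := by
      have := hS.1; rwa [IsHermitian, conjTranspose_eq_transpose_of_trivial] at this
    constructor
    · simp [transpose_smul, transpose_sub, hSt, hWt]
    · intro u hu
      have h1 : u ⬝ᵥ (t • (S - W)).mulVec u = t * (u ⬝ᵥ S.mulVec u) := by
        rw [smul_mulVec, dotProduct_smul, sub_mulVec, dotProduct_sub, hu,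
          dotProduct_zero, sub_zero, smul_eq_mul]
      rw [h1]
      exact mul_nonneg ht (by simpa [star_trivial] using hS.dotProduct_mulVec_nonneg u)
  · -- RHS ⊆ closure
    rintro H ⟨hHsym, hker⟩
    have hmem : ∀ ε : ℝ, 0 < ε → H + ε • (1 : Matrix (Fin n) (Fin n) ℝ) ∈
        {H : Matrix (Fin n) (Fin n) ℝ |
          ∃ t : ℝ, 0 ≤ t ∧ ∃ S : Matrix (Fin n) (Fin n) ℝ, S.PosSemidef ∧ H = t • (S - W)} := by
      intro ε hε
      obtain ⟨δ, hδ, hpsd⟩ := exists_delta n W H hW hHsym hker ε hε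
      refine ⟨δ⁻¹, (inv_pos.mpr hδ).le, W + δ • (H + ε • 1), hpsd, ?_⟩
      rw [add_sub_cancel_left, smul_smul, inv_mul_cancel₀ hδ.ne', one_smul]
    have hlim : Tendsto (fun k : ℕ => H + ((k : ℝ) + 1)⁻¹ • (1 : Matrix (Fin n) (Fin n) ℝ))
        atTop (𝓝 H) := by
      have h1 : Tendsto (fun k : ℕ => ((k : ℝ) + 1)⁻¹) atTop (𝓝 0) := by
        simpa [one_div] using tendsto_one_div_add_atTop_nhds_zero_nat (𝕜 := ℝ)
      have := (h1.smul_const (1 : Matrix (Fin n) (Fin n) ℝ)).const_add H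
      simpa using this
    exact mem_closure_of_tendsto hlim (Eventually.of_forall fun k =>
      hmem _ (by positivity))
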